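/- Let f : ℝ → ℝ be continuously differentiable with f′(t) ≠ 0 for all t ∈ ℝ, and let (θ, ψ) : [0, ∞) → ℝ² be a differentiable curve satisfying θ′(t) = −f′(θ(t)ψ(t))ψ(t) and ψ′(t) = f′(θ(t)ψ(t))θ(t) for all t. Then the function t ↦ θ(t)² + ψ(t)² is constant on [0, ∞); in particular no integral curve with (θ(0), ψ(0)) ≠ (0, 0) converges to the Nash equilibrium (0, 0). -/

import Mathlib

/-- For the Dirac-GAN, every integral curve `(θ(t), ψ(t))`, `t ∈ [0,∞)`, of the gradient
vector field `v(θ, ψ) = (−f′(θψ)ψ, f′(θψ)θ)` satisfies `θ(t)² + ψ(t)² = const`; in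
particular no integral curve starting away from `(0,0)` converges to the Nash
equilibrium `(0, 0)`. -/
theorem dirac_gan_continuous_dynamics_not_convergent
    (f : ℝ → ℝ) (hf : ContDiff ℝ 1 f) (hf' : ∀ t : ℝ, deriv f t ≠ 0)
    (θ ψ : ℝ → ℝ)
    (hθ : ∀ t ∈ Set.Ici (0 : ℝ),
      HasDerivWithinAt θ (-(deriv f (θ t * ψ t)) * ψ t) (Set.Ici (0 : ℝ)) t)
    (hψ : ∀ t ∈ Set.Ici (0 : ℝ),
      HasDerivWithinAt ψ (deriv f (θ t * ψ t) * θ t) (Set.Ici (0 : ℝ)) t) :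
    (∀ t ∈ Set.Ici (0 : ℝ), θ t ^ 2 + ψ t ^ 2 = θ 0 ^ 2 + ψ 0 ^ 2) ∧
    ((θ 0, ψ 0) ≠ (0, 0) →
      ¬ Filter.Tendsto (fun t => (θ t, ψ t)) Filter.atTop (nhds ((0 : ℝ), (0 : ℝ)))) := by
  set g : ℝ → ℝ := fun t => θ t ^ 2 + ψ t ^ 2 with hg
  have hg' : ∀ t ∈ Set.Ici (0 : ℝ), HasDerivWithinAt g 0 (Set.Ici (0 : ℝ)) t := by
    intro t ht
    have h1 : HasDerivWithinAt g _ (Set.Ici (0 : ℝ)) t := ((hθ t ht).fun_pow 2).add ((hψ t ht).fun_pow 2)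
    convert h1 using 1
    ring
  have hconst : ∀ t ∈ Set.Ici (0 : ℝ), g t = g 0 := by
    intro t ht
    have := Convex.norm_image_sub_le_of_norm_hasDerivWithin_le (C := 0)
      (fun x hx => hg' x hx) (fun x _ => by simp) (convex_Ici (0 : ℝ))
      (Set.self_mem_Ici) ht
    simpa [sub_eq_zero] using this
  refine ⟨hconst, ?_⟩
  intro hne htend
  have hgpos : 0 < g 0 := by
    show 0 < θ 0 ^ 2 + ψ 0 ^ 2
    have : θ 0 ≠ 0 ∨ ψ 0 ≠ 0 := by
      by_contra hc
      push_neg at hc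
      exact hne (by simp [hc.1, hc.2])
    rcases this with h | h
    · have := sq_nonneg (ψ 0); nlinarith [sq_pos_of_ne_zero h]
    · have := sq_nonneg (θ 0); nlinarith [sq_pos_of_ne_zero h]
  have htend2 : Filter.Tendsto g Filter.atTop (nhds 0) := by
    have : Filter.Tendsto (fun p : ℝ × ℝ => p.1 ^ 2 + p.2 ^ 2)
        (nhds ((0 : ℝ), (0 : ℝ))) (nhds 0) := by
      have := Filter.Tendsto.add
        ((continuous_fst.pow 2).tendsto ((0 : ℝ), (0 : ℝ)))
        ((continuous_snd.pow 2).tendsto ((0 : ℝ), (0 : ℝ)))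
      simpa [sub_eq_zero] using this
    exact this.comp htend
  have heq : ∀ᶠ t in Filter.atTop, g t = g 0 :=
    Filter.eventually_atTop.2 ⟨0, fun t ht => hconst t ht⟩
  have : Filter.Tendsto (fun _ : ℝ => g 0) Filter.atTop (nhds 0) :=
    htend2.congr' heq
  have := tendsto_nhds_unique this tendsto_const_nhds
  linarith
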